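/- (Mirsky–Newman) If k ≥ 2 arithmetic progressions in ℤ are pairwise disjoint and their union is ℤ, then two of them have the same common difference. -/

import Mathlib

/-- Arithmetic progression in ℤ with offset `a` and difference `n`. -/
def AP (a n : ℤ) : Set ℤ := {x : ℤ | ∃ m : ℤ, x = a + m * n}

lemma mem_AP_iff {a n x : ℤ} : x ∈ AP a n ↔ x % n = a % n := by
  constructor
  · rintro ⟨m, rfl⟩
    simp [Int.add_mul_emod_self_left, Int.mul_emod_right]
  · intro h
    have hdvd : n ∣ x - a := by
      have : x ≡ a [ZMOD n] := h
      exact (Int.modEq_iff_dvd.mp this.symm)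
    obtain ⟨c, hc⟩ := hdvd
    exact ⟨c, by linarith [hc]⟩

theorem mirsky_newman (k : ℕ) (hk : 2 ≤ k) (a n : Fin k → ℤ)
    (hn : ∀ i, 1 ≤ n i)
    (hdisj : ∀ i j, i ≠ j → Disjoint (AP (a i) (n i)) (AP (a j) (n j)))
    (hcover : (⋃ i, AP (a i) (n i)) = Set.univ) :
    ∃ i j, i ≠ j ∧ n i = n j := by
  by_contra hcon
  push_neg at hcon
  have hinj : Function.Injective n := by
    intro i j hij
    by_contra hne
    exact hcon i j hne hij
  -- maximizer
  haveI : Nonempty (Fin k) := Fin.pos_iff_nonempty.mp (by omega)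
  have hne : (Finset.univ : Finset (Fin k)).Nonempty := Finset.univ_nonempty
  obtain ⟨M, -, hM⟩ := Finset.exists_max_image Finset.univ n hne
  -- natural number versions
  set nn : Fin k → ℕ := fun i => (n i).toNat with hnn
  have hnncast : ∀ i, ((nn i : ℤ)) = n i := fun i => Int.toNat_of_nonneg (by linarith [hn i])
  have hnnpos : ∀ i, 0 < nn i := by
    intro i; have h1 := hnncast i; have h2 := hn i; omega
  -- the max difference is at least 2
  obtain ⟨j₀, hj₀⟩ := Fintype.exists_ne_of_one_lt_card (by simp; omega) M
  have hj₀lt : n j₀ < n M := lt_of_le_of_ne (hM j₀ (Finset.mem_univ _)) (hcon j₀ M hj₀)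
  have hM2 : 2 ≤ nn M := by
    have h1 := hn j₀; have h2 := hnncast M; have h3 := hnncast j₀; omega
  -- N = product of all differences
  set N : ℕ := ∏ i, nn i with hN
  have hdvd : ∀ i, nn i ∣ N := fun i => Finset.dvd_prod_of_mem nn (Finset.mem_univ i)
  have hNpos : 0 < N := Finset.prod_pos fun i _ => hnnpos i
  -- offsets reduced mod the difference
  set b : Fin k → ℕ := fun i => (a i % n i).toNat with hb
  have hbcast : ∀ i, ((b i : ℤ)) = a i % n i := fun i =>
    Int.toNat_of_nonneg (Int.emod_nonneg _ (by have := hn i; omega))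
  have hblt : ∀ i, b i < nn i := by
    intro i
    have h1 : a i % n i < n i := Int.emod_lt_of_pos _ (by linarith [hn i])
    have h2 := hbcast i; have h3 := hnncast i; omega
  -- membership criterion for naturals
  have hmem : ∀ (i : Fin k) (x : ℕ), (x : ℤ) ∈ AP (a i) (n i) ↔ x % nn i = b i := by
    intro i x
    rw [mem_AP_iff]
    rw [← hbcast i, ← hnncast i]
    omega
  -- the primitive root
  set ζ : ℂ := Complex.exp (2 * Real.pi * Complex.I / (nn M)) with hζ
  have hprim : IsPrimitiveRoot ζ (nn M) := Complex.isPrimitiveRoot_exp _ (by omega)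
  have hζ0 : ζ ≠ 0 := Complex.exp_ne_zero _
  have hζ1 : ζ ≠ 1 := by
    intro h
    have h2 : nn M ∣ 1 := hprim.dvd_of_pow_eq_one 1 (by simp [h])
    have := Nat.le_of_dvd one_pos h2
    omega
  have hζpow : ∀ i, ζ ^ nn i = 1 ↔ i = M := by
    intro i
    constructor
    · intro h
      have hdd : nn M ∣ nn i := hprim.dvd_of_pow_eq_one _ h
      have hle : nn i ≤ nn M := by
        have h1 := hM i (Finset.mem_univ _); have h2 := hnncast i; have h3 := hnncast M; omega
      have : nn i = nn M := Nat.dvd_antisymm (dvd_of_eq (Nat.le_antisymm hle (Nat.le_of_dvd (hnnpos i) hdd))) hdd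
      apply hinj
      rw [← hnncast i, ← hnncast M, this]
    · rintro rfl
      exact hprim.pow_eq_one
  have hζN : ζ ^ N = 1 := by
    obtain ⟨c, hc⟩ := hdvd M
    rw [hc, pow_mul, hprim.pow_eq_one, one_pow]
  -- choice function: which AP contains x
  have hex : ∀ x : ℤ, ∃ i, x ∈ AP (a i) (n i) := by
    intro x
    have : x ∈ ⋃ i, AP (a i) (n i) := by rw [hcover]; trivial
    simpa using this
  choose c hc using hex
  have hcx : ∀ (x : ℤ) (i : Fin k), x ∈ AP (a i) (n i) ↔ c x = i := by
    intro x i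
    constructor
    · intro h
      by_contra hne
      exact (hdisj _ _ hne).ne_of_mem (hc x) h rfl
    · rintro rfl; exact hc x
  -- main counting identity
  have key : ∑ x ∈ Finset.range N, ζ ^ x
      = ∑ i : Fin k, ∑ x ∈ Finset.range N with c ((x : ℕ) : ℤ) = i, ζ ^ x :=
    (Finset.sum_fiberwise (Finset.range N) (fun x : ℕ => c (x : ℤ)) (fun x => ζ ^ x)).symm
  -- LHS is zero
  have hLHS : ∑ x ∈ Finset.range N, ζ ^ x = 0 := by
    rw [geom_sum_eq hζ1, hζN]; simp
  -- compute each fiber sum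
  have hfiber : ∀ i : Fin k, ∑ x ∈ Finset.range N with c ((x : ℕ) : ℤ) = i, ζ ^ x
      = ζ ^ b i * (if i = M then ((N / nn M : ℕ) : ℂ) else 0) := by
    intro i
    have hset : (Finset.range N).filter (fun x : ℕ => c (x : ℤ) = i)
        = (Finset.range (N / nn i)).image (fun t => b i + t * nn i) := by
      ext x
      simp only [Finset.mem_filter, Finset.mem_range, Finset.mem_image]
      constructor
      · rintro ⟨hx, hcx'⟩
        have hxm : x % nn i = b i := (hmem i x).mp ((hcx x i).mpr hcx')
        refine ⟨x / nn i, ?_, ?_⟩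
        · exact Nat.div_lt_div_of_lt_of_dvd (hdvd i) hx
        · conv_rhs => rw [← Nat.mod_add_div x (nn i)]
          rw [hxm]; ring
      · rintro ⟨t, ht, rfl⟩
        have hlt : b i + t * nn i < N := by
          have h1 : t + 1 ≤ N / nn i := ht
          have h2 : (t + 1) * nn i ≤ (N / nn i) * nn i :=
            Nat.mul_le_mul_right _ h1
          have h3 : (N / nn i) * nn i = N := Nat.div_mul_cancel (hdvd i)
          have := hblt i
          nlinarith
        refine ⟨hlt, (hcx _ i).mp ((hmem i _).mpr ?_)⟩
        simp [Nat.add_mul_mod_self_right, Nat.mod_eq_of_lt (hblt i)]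
    rw [hset, Finset.sum_image]
    · have : ∀ t ∈ Finset.range (N / nn i), ζ ^ (b i + t * nn i) = ζ ^ b i * (ζ ^ nn i) ^ t := by
        intro t _
        rw [pow_add, mul_comm t (nn i), pow_mul]
      rw [Finset.sum_congr rfl this, ← Finset.mul_sum]
      congr 1
      by_cases hi : i = M
      · subst hi
        rw [if_pos rfl]
        simp [hprim.pow_eq_one]
      · rw [if_neg hi]
        have hne1 : ζ ^ nn i ≠ 1 := fun h => hi ((hζpow i).mp h)
        rw [geom_sum_eq hne1]
        have : (ζ ^ nn i) ^ (N / nn i) = 1 := by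
          rw [← pow_mul, Nat.mul_div_cancel' (hdvd i), hζN]
        rw [this]; simp
    · intro x _ y _ hxy
      have h := Nat.add_left_cancel hxy
      exact Nat.eq_of_mul_eq_mul_right (hnnpos i) h
  -- conclude
  rw [hLHS] at key
  rw [Finset.sum_congr rfl (fun i _ => hfiber i)] at key
  simp only [mul_ite, mul_zero] at key
  rw [Finset.sum_ite_eq' Finset.univ M (fun i => ζ ^ b i * ((N / nn M : ℕ) : ℂ))] at key
  simp only [Finset.mem_univ, if_true] at key
  have hq : 0 < N / nn M := Nat.div_pos (Nat.le_of_dvd hNpos (hdvd M)) (by omega)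
  have h1 : ζ ^ b M ≠ 0 := pow_ne_zero _ hζ0
  have h2 : ((N / nn M : ℕ) : ℂ) ≠ 0 := Nat.cast_ne_zero.mpr (by omega)
  exact (mul_ne_zero h1 h2) key.symm
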